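/- Let Y be an integrable real random variable with continuous CDF F that is a mixture F = (1-p)F0 + pF1 with mixing probability p ∈ (0,1], where F1 is the CDF of an integrable component with finite mean μ1 = ∫ y dF1(y). Let y_p = F⁻¹(p) be the p-quantile of F. Then the mean of Y conditional on Y ≤ y_p, i.e., (1/p)·∫_{(-∞, y_p]} y dF(y), is less than or equal to μ1, and the mean of Y conditional on Y ≥ F⁻¹(1-p) is greater than or equal to μ1. -/

import Mathlib

open MeasureTheory

/-- The CDF of a measure on `ℝ`. -/
noncomputable def cdfOf (ν : Measure ℝ) (y : ℝ) : ℝ := (ν (Set.Iic y)).toReal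

/-- Generalized inverse (quantile function) of a CDF. -/
noncomputable def qtl (F : ℝ → ℝ) (u : ℝ) : ℝ := sInf {y : ℝ | u ≤ F y}

lemma cdfOf_eq_cdf (ν : Measure ℝ) [IsProbabilityMeasure ν] :
    cdfOf ν = fun y => ProbabilityTheory.cdf ν y := by
  funext y
  rw [ProbabilityTheory.cdf_eq_real]
  rfl

/-- For continuous `F` and `0 < u < 1`, the measure of `Iic (qtl F u)` is `u`. -/
lemma measure_Iic_qtl (ν : Measure ℝ) [IsProbabilityMeasure ν]
    (hcont : Continuous (cdfOf ν)) {u : ℝ} (hu0 : 0 < u) (hu1 : u < 1) :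
    ν (Set.Iic (qtl (cdfOf ν) u)) = ENNReal.ofReal u := by
  set F := cdfOf ν with hF
  have hFc : F = fun y => ProbabilityTheory.cdf ν y := cdfOf_eq_cdf ν
  have htop : Filter.Tendsto F Filter.atTop (nhds 1) := by
    rw [hFc]; exact ProbabilityTheory.tendsto_cdf_atTop ν
  have hbot : Filter.Tendsto F Filter.atBot (nhds 0) := by
    rw [hFc]; exact ProbabilityTheory.tendsto_cdf_atBot ν
  have hmono : Monotone F := by
    rw [hFc]; exact ProbabilityTheory.monotone_cdf ν
  set S := {y : ℝ | u ≤ F y} with hS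
  have hSne : S.Nonempty := by
    obtain ⟨y, hy⟩ := (htop.eventually (eventually_ge_nhds hu1)).exists
    exact ⟨y, hy⟩
  obtain ⟨b, hb⟩ := (hbot.eventually (eventually_lt_nhds hu0)).exists
  have hbdd : BddBelow S := by
    refine ⟨b, fun y hy => ?_⟩
    by_contra hby
    push_neg at hby
    exact absurd (hy.trans (hmono hby.le)) (not_le.mpr hb)
  have hclosed : IsClosed S := isClosed_le continuous_const hcont
  set q := sInf S with hq
  have hqS : q ∈ S := hclosed.csInf_mem hSne hbdd
  have h1 : u ≤ F q := hqS
  have h2 : F q ≤ u := by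
    have htend : Filter.Tendsto F (nhdsWithin q (Set.Iio q)) (nhds (F q)) :=
      (hcont.tendsto q).mono_left nhdsWithin_le_nhds
    refine le_of_tendsto htend ?_
    refine Filter.eventually_of_mem self_mem_nhdsWithin fun y hy => ?_
    by_contra hlt
    push_neg at hlt
    exact absurd (csInf_le hbdd (le_of_lt hlt : u ≤ F y)) (not_le.mpr hy)
  have hFq : F q = u := le_antisymm h2 h1
  have : ENNReal.ofReal (ProbabilityTheory.cdf ν q) = ν (Set.Iic q) :=
    ProbabilityTheory.ofReal_cdf ν q
  have hqtl : qtl F u = q := rfl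
  rw [hqtl, ← this]
  congr 1
  rw [← hFq, hFc]

/-- Continuity of the CDF implies no atoms. -/
lemma measure_singleton_eq_zero (ν : Measure ℝ) [IsProbabilityMeasure ν]
    (hcont : Continuous (cdfOf ν)) (q : ℝ) : ν {q} = 0 := by
  set F := cdfOf ν with hF
  have key : ∀ y < q, (ν {q}).toReal ≤ F q - F y := by
    intro y hy
    have hsub : ({q} : Set ℝ) ⊆ Set.Iic q \ Set.Iic y := by
      intro x hx
      simp only [Set.mem_singleton_iff] at hx
      subst hx
      exact ⟨Set.mem_Iic.mpr le_rfl, fun h => absurd (Set.mem_Iic.mp h) (not_le.mpr hy)⟩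
    have hdiff : ν (Set.Iic q \ Set.Iic y) = ν (Set.Iic q) - ν (Set.Iic y) :=
      measure_diff (Set.Iic_subset_Iic.mpr hy.le) measurableSet_Iic.nullMeasurableSet
        (measure_ne_top ν _)
    have h1 : (ν {q}).toReal ≤ (ν (Set.Iic q \ Set.Iic y)).toReal :=
      ENNReal.toReal_mono (measure_ne_top ν _) (measure_mono hsub)
    have h2 : (ν (Set.Iic q \ Set.Iic y)).toReal = F q - F y := by
      rw [hdiff, ENNReal.toReal_sub_of_le (measure_mono (Set.Iic_subset_Iic.mpr hy.le))
        (measure_ne_top ν _)]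
      rfl
    linarith [h1, h2.le, h2.ge]
  have htend : Filter.Tendsto (fun y => F q - F y) (nhdsWithin q (Set.Iio q)) (nhds 0) := by
    have : Filter.Tendsto F (nhdsWithin q (Set.Iio q)) (nhds (F q)) :=
      (hcont.tendsto q).mono_left nhdsWithin_le_nhds
    have h : Filter.Tendsto (fun y => F q - F y) (nhdsWithin q (Set.Iio q))
        (nhds (F q - F q)) := Filter.Tendsto.sub tendsto_const_nhds this
    rwa [sub_self] at h
  have hle : (ν {q}).toReal ≤ 0 := by
    refine ge_of_tendsto htend ?_
    exact Filter.eventually_of_mem self_mem_nhdsWithin fun y hy => key y hy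
  have h0 : (ν {q}).toReal = 0 := le_antisymm hle ENNReal.toReal_nonneg
  exact ((ENNReal.toReal_eq_zero_iff _).mp h0).resolve_right (measure_ne_top ν _)

/-- Lower tail bound. -/
lemma tail_lower (ν ν0 ν1 : Measure ℝ) [IsProbabilityMeasure ν] [IsProbabilityMeasure ν0]
    [IsProbabilityMeasure ν1] {p a : ℝ} (hp0 : 0 ≤ p) (hp1 : p ≤ 1)
    (hmix : ν = ENNReal.ofReal (1 - p) • ν0 + ENNReal.ofReal p • ν1)
    (hA : ν (Set.Iic a) = ENNReal.ofReal p)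
    (hint : Integrable id ν) (hint0 : Integrable id ν0) (hint1 : Integrable id ν1) :
    ∫ y in Set.Iic a, y ∂ν ≤ p * ∫ y, y ∂ν1 := by
  set g : ℝ → ℝ := fun y => y - a with hg_def
  have hgν : Integrable g ν := hint.sub (integrable_const a)
  have hg0 : Integrable g ν0 := hint0.sub (integrable_const a)
  have hg1 : Integrable g ν1 := hint1.sub (integrable_const a)
  have hres : ν.restrict (Set.Iic a) =
      ENNReal.ofReal (1 - p) • ν0.restrict (Set.Iic a)
        + ENNReal.ofReal p • ν1.restrict (Set.Iic a) := by
    rw [hmix, Measure.restrict_add, Measure.restrict_smul, Measure.restrict_smul]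
  have h1 : ∫ y in Set.Iic a, g y ∂ν
      = (1 - p) * ∫ y in Set.Iic a, g y ∂ν0 + p * ∫ y in Set.Iic a, g y ∂ν1 := by
    rw [hres, integral_add_measure (hg0.restrict.smul_measure ENNReal.ofReal_ne_top)
      (hg1.restrict.smul_measure ENNReal.ofReal_ne_top),
      integral_smul_measure, integral_smul_measure,
      ENNReal.toReal_ofReal (by linarith), ENNReal.toReal_ofReal hp0, smul_eq_mul, smul_eq_mul]
  have h2 : ∫ y in Set.Iic a, g y ∂ν1 + ∫ y in Set.Ioi a, g y ∂ν1 = ∫ y, g y ∂ν1 := by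
    rw [← Set.compl_Iic]
    exact integral_add_compl measurableSet_Iic hg1
  have hI0 : ∫ y in Set.Iic a, g y ∂ν0 ≤ 0 :=
    setIntegral_nonpos measurableSet_Iic fun y hy => sub_nonpos.mpr hy
  have hJ1 : 0 ≤ ∫ y in Set.Ioi a, g y ∂ν1 :=
    setIntegral_nonneg measurableSet_Ioi fun y hy => sub_nonneg.mpr (le_of_lt hy)
  have hfun : (fun y : ℝ => g y + a) = fun y => y := by funext y; simp [hg_def]
  have h3 : ∫ y in Set.Iic a, y ∂ν = ∫ y in Set.Iic a, g y ∂ν + p * a := by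
    have := integral_add (hgν.restrict (s := Set.Iic a)) (integrable_const a)
    rw [hfun] at this
    rw [this, setIntegral_const, measureReal_def, hA, ENNReal.toReal_ofReal hp0, smul_eq_mul]
  have h4 : ∫ y, y ∂ν1 = ∫ y, g y ∂ν1 + a := by
    have := integral_add hg1 (integrable_const a)
    rw [hfun] at this
    rw [this, integral_const, measureReal_def, measure_univ, ENNReal.toReal_one, one_smul]
  have f1 : (1 - p) * ∫ y in Set.Iic a, g y ∂ν0 ≤ 0 :=
    mul_nonpos_of_nonneg_of_nonpos (by linarith) hI0
  have f2 : 0 ≤ p * ∫ y in Set.Ioi a, g y ∂ν1 := mul_nonneg hp0 hJ1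
  rw [h3, h4, h1, ← h2]
  nlinarith [f1, f2]

/-- Upper tail bound. -/
lemma tail_upper (ν ν0 ν1 : Measure ℝ) [IsProbabilityMeasure ν] [IsProbabilityMeasure ν0]
    [IsProbabilityMeasure ν1] {p a : ℝ} (hp0 : 0 ≤ p) (hp1 : p ≤ 1)
    (hmix : ν = ENNReal.ofReal (1 - p) • ν0 + ENNReal.ofReal p • ν1)
    (hA : ν (Set.Ici a) = ENNReal.ofReal p)
    (hint : Integrable id ν) (hint0 : Integrable id ν0) (hint1 : Integrable id ν1) :
    p * ∫ y, y ∂ν1 ≤ ∫ y in Set.Ici a, y ∂ν := by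
  set g : ℝ → ℝ := fun y => y - a with hg_def
  have hgν : Integrable g ν := hint.sub (integrable_const a)
  have hg0 : Integrable g ν0 := hint0.sub (integrable_const a)
  have hg1 : Integrable g ν1 := hint1.sub (integrable_const a)
  have hres : ν.restrict (Set.Ici a) =
      ENNReal.ofReal (1 - p) • ν0.restrict (Set.Ici a)
        + ENNReal.ofReal p • ν1.restrict (Set.Ici a) := by
    rw [hmix, Measure.restrict_add, Measure.restrict_smul, Measure.restrict_smul]
  have h1 : ∫ y in Set.Ici a, g y ∂ν
      = (1 - p) * ∫ y in Set.Ici a, g y ∂ν0 + p * ∫ y in Set.Ici a, g y ∂ν1 := by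
    rw [hres, integral_add_measure (hg0.restrict.smul_measure ENNReal.ofReal_ne_top)
      (hg1.restrict.smul_measure ENNReal.ofReal_ne_top),
      integral_smul_measure, integral_smul_measure,
      ENNReal.toReal_ofReal (by linarith), ENNReal.toReal_ofReal hp0, smul_eq_mul, smul_eq_mul]
  have h2 : ∫ y in Set.Ici a, g y ∂ν1 + ∫ y in Set.Iio a, g y ∂ν1 = ∫ y, g y ∂ν1 := by
    rw [← Set.compl_Ici]
    exact integral_add_compl measurableSet_Ici hg1
  have hI0 : 0 ≤ ∫ y in Set.Ici a, g y ∂ν0 :=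
    setIntegral_nonneg measurableSet_Ici fun y hy => sub_nonneg.mpr hy
  have hJ1 : ∫ y in Set.Iio a, g y ∂ν1 ≤ 0 :=
    setIntegral_nonpos measurableSet_Iio fun y hy => sub_nonpos.mpr (le_of_lt hy)
  have hfun : (fun y : ℝ => g y + a) = fun y => y := by funext y; simp [hg_def]
  have h3 : ∫ y in Set.Ici a, y ∂ν = ∫ y in Set.Ici a, g y ∂ν + p * a := by
    have := integral_add (hgν.restrict (s := Set.Ici a)) (integrable_const a)
    rw [hfun] at this
    rw [this, setIntegral_const, measureReal_def, hA, ENNReal.toReal_ofReal hp0, smul_eq_mul]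
  have h4 : ∫ y, y ∂ν1 = ∫ y, g y ∂ν1 + a := by
    have := integral_add hg1 (integrable_const a)
    rw [hfun] at this
    rw [this, integral_const, measureReal_def, measure_univ, ENNReal.toReal_one, one_smul]
  have f1 : 0 ≤ (1 - p) * ∫ y in Set.Ici a, g y ∂ν0 :=
    mul_nonneg (by linarith) hI0
  have f2 : p * ∫ y in Set.Iio a, g y ∂ν1 ≤ 0 :=
    mul_nonpos_of_nonneg_of_nonpos hp0 hJ1
  rw [h3, h4, h1, ← h2]
  nlinarith [f1, f2]

/-- Horowitz–Manski (1995) Proposition 4: trimmed means bound the component mean. -/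
theorem stmt_2
    (ν ν0 ν1 : Measure ℝ) [IsProbabilityMeasure ν] [IsProbabilityMeasure ν0]
    [IsProbabilityMeasure ν1] (p : ℝ) (hp : p ∈ Set.Ioc (0 : ℝ) 1)
    (hmix : ν = ENNReal.ofReal (1 - p) • ν0 + ENNReal.ofReal p • ν1)
    (hcont : Continuous (cdfOf ν))
    (hint : Integrable id ν) (hint0 : Integrable id ν0) (hint1 : Integrable id ν1) :
    (1 / p) * ∫ y in Set.Iic (qtl (cdfOf ν) p), y ∂ν ≤ ∫ y, y ∂ν1 ∧
      ∫ y, y ∂ν1 ≤ (1 / p) * ∫ y in Set.Ici (qtl (cdfOf ν) (1 - p)), y ∂ν := by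
  obtain ⟨hp0, hp1⟩ := hp
  rcases eq_or_lt_of_le hp1 with hpe | hplt
  · -- p = 1
    subst hpe
    simp only [sub_self, ENNReal.ofReal_zero, zero_smul, zero_add, ENNReal.ofReal_one,
      one_smul] at hmix
    subst hmix
    simp only [one_div, inv_one, one_mul]
    constructor
    · -- ∫ over Iic (qtl F 1) ≤ total
      set a := qtl (cdfOf ν) 1 with ha
      have hineq : 0 ≤ ∫ y in Set.Ioi a, y ∂ν := by
        by_cases hSne : {y : ℝ | (1:ℝ) ≤ cdfOf ν y}.Nonempty
        · -- quantile reaches 1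
          have hbot : Filter.Tendsto (cdfOf ν) Filter.atBot (nhds 0) := by
            rw [cdfOf_eq_cdf]; exact ProbabilityTheory.tendsto_cdf_atBot ν
          have hmono : Monotone (cdfOf ν) := by
            rw [cdfOf_eq_cdf]; exact ProbabilityTheory.monotone_cdf ν
          obtain ⟨b, hb⟩ := (hbot.eventually (eventually_lt_nhds one_pos)).exists
          have hbdd : BddBelow {y : ℝ | (1:ℝ) ≤ cdfOf ν y} := by
            refine ⟨b, fun y hy => ?_⟩
            by_contra hby
            push_neg at hby
            exact absurd (hy.trans (hmono hby.le)) (not_le.mpr hb)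
          have hclosed : IsClosed {y : ℝ | (1:ℝ) ≤ cdfOf ν y} :=
            isClosed_le continuous_const hcont
          have haS : a ∈ {y : ℝ | (1:ℝ) ≤ cdfOf ν y} := hclosed.csInf_mem hSne hbdd
          have hIic : ν (Set.Iic a) = 1 := by
            have h1 : (1:ℝ) ≤ (ν (Set.Iic a)).toReal := haS
            have h2 : ν (Set.Iic a) ≤ 1 := prob_le_one
            have := ENNReal.toReal_mono (by norm_num) h2
            simp only [ENNReal.toReal_one] at this
            have heq : (ν (Set.Iic a)).toReal = 1 := le_antisymm this h1
            rw [← ENNReal.ofReal_toReal (measure_ne_top ν _), heq]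
            simp
          have hIoi : ν (Set.Ioi a) = 0 := by
            have := measure_compl (measurableSet_Iic (a := a)) (measure_ne_top ν _)
            rw [Set.compl_Iic, hIic, measure_univ] at this
            simpa using this
          rw [Measure.restrict_eq_zero.mpr hIoi]
          simp
        · -- empty: a = 0
          rw [Set.not_nonempty_iff_eq_empty] at hSne
          have ha0 : a = 0 := by
            rw [ha]; unfold qtl; rw [hSne]; exact Real.sInf_empty
          rw [ha0]
          exact setIntegral_nonneg measurableSet_Ioi fun y hy => le_of_lt hy
      have := integral_add_compl (measurableSet_Iic (a := a)) hint
      rw [Set.compl_Iic] at this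
      have : ∫ y in Set.Iic a, y ∂ν + ∫ y in Set.Ioi a, y ∂ν = ∫ y, y ∂ν := this
      linarith
    · -- total ≤ ∫ over Ici (qtl F 0)
      have hU : {y : ℝ | (1 - (1:ℝ)) ≤ cdfOf ν y} = Set.univ := by
        ext y
        simp [cdfOf, ENNReal.toReal_nonneg]
      have hq0 : qtl (cdfOf ν) (1 - 1) = 0 := by
        unfold qtl
        rw [hU, csInf_of_not_bddBelow not_bddBelow_univ, Real.sInf_empty]
      rw [hq0]
      have hineq : ∫ y in Set.Iio (0:ℝ), y ∂ν ≤ 0 :=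
        setIntegral_nonpos measurableSet_Iio fun y hy => le_of_lt hy
      have h2 := integral_add_compl (measurableSet_Ici (a := (0:ℝ))) hint
      rw [Set.compl_Ici] at h2
      have h3 : ∫ y in Set.Ici (0:ℝ), y ∂ν + ∫ y in Set.Iio (0:ℝ), y ∂ν = ∫ y, y ∂ν := h2
      linarith
  · -- p < 1
    have hq1 : ν (Set.Iic (qtl (cdfOf ν) p)) = ENNReal.ofReal p :=
      measure_Iic_qtl ν hcont hp0 hplt
    have hlow := tail_lower ν ν0 ν1 hp0.le hp1 hmix hq1 hint hint0 hint1
    have hq2 : ν (Set.Iic (qtl (cdfOf ν) (1 - p))) = ENNReal.ofReal (1 - p) :=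
      measure_Iic_qtl ν hcont (by linarith) (by linarith)
    set q2 := qtl (cdfOf ν) (1 - p) with hq2def
    have hsing : ν {q2} = 0 := measure_singleton_eq_zero ν hcont q2
    have hIio : ν (Set.Iio q2) = ENNReal.ofReal (1 - p) := by
      have hdiff : Set.Iic q2 \ {q2} = Set.Iio q2 := by
        ext y
        simp only [Set.mem_diff, Set.mem_Iic, Set.mem_singleton_iff, Set.mem_Iio]
        constructor
        · rintro ⟨h1, h2⟩; exact lt_of_le_of_ne h1 h2
        · intro h; exact ⟨h.le, ne_of_lt h⟩
      rw [← hdiff, measure_diff_null hsing, hq2]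
    have hIci : ν (Set.Ici q2) = ENNReal.ofReal p := by
      have := measure_compl (measurableSet_Iio (a := q2)) (measure_ne_top ν _)
      rw [Set.compl_Iio, hIio, measure_univ] at this
      rw [this]
      have hsum : ENNReal.ofReal (1 - p) + ENNReal.ofReal p = 1 := by
        rw [← ENNReal.ofReal_add (by linarith) hp0.le]
        norm_num
      rw [← hsum, ENNReal.add_sub_cancel_left ENNReal.ofReal_ne_top]
    have hup := tail_upper ν ν0 ν1 hp0.le hp1 hmix hIci hint hint0 hint1
    constructor
    · have h := mul_le_mul_of_nonneg_left hlow (le_of_lt (one_div_pos.mpr hp0))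
      calc (1 / p) * ∫ y in Set.Iic (qtl (cdfOf ν) p), y ∂ν
          ≤ (1 / p) * (p * ∫ y, y ∂ν1) := h
        _ = ∫ y, y ∂ν1 := by field_simp
    · have h := mul_le_mul_of_nonneg_left hup (le_of_lt (one_div_pos.mpr hp0))
      calc ∫ y, y ∂ν1 = (1 / p) * (p * ∫ y, y ∂ν1) := by field_simp
        _ ≤ (1 / p) * ∫ y in Set.Ici q2, y ∂ν := h
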